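/- arXiv:2210.11700 — 2 statements merged into one kernel-verified Lean document; each statement's English description precedes it below -/
import Mathlib

section
/- Let n ≥ 3, D_{2n} = ⟨a, b | a^n = b² = 1, a^b = a^{−1}⟩, and let Γ = Cay(D_{2n}, S) with A = Aut(Γ). Suppose R ≤ A is a regular subgroup isomorphic to D_{2n}. Then R is conjugate to R(D_{2n}) in A if and only if the unique cyclic subgroup of order n of R is conjugate to ⟨R(a)⟩ in A. -/
/-- The Cayley digraph relation of `G` with connection set `S`:
there is an arc from `x` to `y` iff `y = s * x` for some `s ∈ S`. -/
def cayRel {G : Type*} [Group G] (S : Set G) : G → G → Prop :=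
  fun x y => y * x⁻¹ ∈ S

/-- The automorphism group of the Cayley digraph `Cay(G,S)`,
as a subgroup of the permutations of the vertex set `G`. -/
def cayAut {G : Type*} [Group G] (S : Set G) : Subgroup (Equiv.Perm G) where
  carrier := {f | ∀ x y, cayRel S (f x) (f y) ↔ cayRel S x y}
  one_mem' := by intro x y; rfl
  mul_mem' := by
    intro f g hf hg x y
    rw [Equiv.Perm.mul_apply, Equiv.Perm.mul_apply, hf, hg]
  inv_mem' := by
    intro f hf x y
    simpa [Equiv.Perm.inv_def] using (hf (f⁻¹ x) (f⁻¹ y)).symm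

/-- `Cay(G,S)` is a CI-digraph: any isomorphic Cayley digraph `Cay(G,T)`
is Cayley isomorphic to it. -/
def IsCIDigraph {G : Type*} [Group G] (S : Set G) : Prop :=
  ∀ T : Set G, (1 : G) ∉ T → Nonempty (cayRel S ≃r cayRel T) →
    ∃ α : G ≃* G, α '' S = T

/-- `G` has the `m`-DCI property: every Cayley digraph of `G` of out-valency `m`
is a CI-digraph. -/
def HasDCI (G : Type*) [Group G] (m : ℕ) : Prop :=
  ∀ S : Set G, (1 : G) ∉ S → S.ncard = m → IsCIDigraph S

/-- The right regular representation `R(G)` as a subgroup of `Perm G`. -/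
def rightReg (G : Type*) [Group G] : Subgroup (Equiv.Perm G) where
  carrier := Set.range fun g : G => Equiv.mulRight g
  one_mem' := ⟨1, by ext x; simp⟩
  mul_mem' := by
    rintro _ _ ⟨g, rfl⟩ ⟨h, rfl⟩
    exact ⟨h * g, by ext x; simp [mul_assoc]⟩
  inv_mem' := by
    rintro _ ⟨g, rfl⟩
    exact ⟨g⁻¹, by ext x; simp [Equiv.Perm.inv_def]⟩

/-- A subgroup of permutations of `V` is regular if for all `x y : V` there is a
unique element sending `x` to `y`. -/
def IsRegularSubgroup {V : Type*} (H : Subgroup (Equiv.Perm V)) : Prop :=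
  ∀ x y : V, ∃! h : H, (h : Equiv.Perm V) x = y

section auxmulright

variable {G : Type*} [Group G]

lemma mulRight_mul' (a b : G) :
    Equiv.mulRight (a * b) = Equiv.mulRight b * Equiv.mulRight a := by
  ext x; simp [mul_assoc]

lemma mulRight_pow' (a : G) (k : ℕ) :
    (Equiv.mulRight a) ^ k = Equiv.mulRight (a ^ k) := by
  induction k with
  | zero => ext x; simp
  | succ k ih => rw [pow_succ, ih, pow_succ', mulRight_mul']

lemma mulRight_inv' (a : G) :
    (Equiv.mulRight a)⁻¹ = Equiv.mulRight a⁻¹ := by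
  ext x; simp [Equiv.Perm.inv_def]

lemma mulRight_zpow' (a : G) (k : ℤ) :
    (Equiv.mulRight a) ^ k = Equiv.mulRight (a ^ k) := by
  cases k with
  | ofNat m => simpa using mulRight_pow' a m
  | negSucc m =>
      rw [zpow_negSucc, zpow_negSucc, mulRight_pow', mulRight_inv']

lemma mulRight_injective' : Function.Injective (Equiv.mulRight : G → Equiv.Perm G) := by
  intro a b h
  simpa using congrArg (fun e : Equiv.Perm G => e 1) h

lemma orderOf_mulRight' (a : G) : orderOf (Equiv.mulRight a : Equiv.Perm G) = orderOf a := by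
  apply orderOf_eq_orderOf_iff.mpr
  intro k
  rw [mulRight_pow']
  constructor
  · intro h
    have := congrArg (fun e : Equiv.Perm G => e 1) h
    simpa using this
  · intro h; rw [h]; ext x; simp

lemma isCyclic_zpowers' (a : G) : IsCyclic (Subgroup.zpowers a) := by
  refine ⟨⟨a, Subgroup.mem_zpowers a⟩, ?_⟩
  rintro ⟨x, hx⟩
  obtain ⟨k, hk⟩ := Subgroup.mem_zpowers_iff.mp hx
  exact Subgroup.mem_zpowers_iff.mpr ⟨k, Subtype.ext (by simpa using hk)⟩

end auxmulright

section auxdihedral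

open DihedralGroup Subgroup

lemma r_mem_zpowers_r_one {n : ℕ} [NeZero n] (i : ZMod n) :
    (r i : DihedralGroup n) ∈ zpowers (r 1 : DihedralGroup n) :=
  mem_zpowers_iff.mpr ⟨(i.val : ℤ), by
    rw [zpow_natCast, r_one_pow, ZMod.natCast_zmod_val]⟩

/-- For `n ≥ 3`, the unique cyclic subgroup of order `n` of `D_{2n}` is the rotation
subgroup. -/
lemma cyclic_subgroup_eq_rot {n : ℕ} (hn : 3 ≤ n) (H : Subgroup (DihedralGroup n))
    (hc : IsCyclic H) (hcard : Nat.card H = n) :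
    H = zpowers (r 1 : DihedralGroup n) := by
  haveI : NeZero n := ⟨by omega⟩
  obtain ⟨g, hg⟩ := hc.exists_generator
  have hHg : H = zpowers (g : DihedralGroup n) := by
    apply le_antisymm
    · intro x hx
      obtain ⟨k, hk⟩ := mem_zpowers_iff.mp (hg ⟨x, hx⟩)
      exact mem_zpowers_iff.mpr ⟨k, by simpa using congrArg (Subtype.val) hk⟩
    · exact zpowers_le.mpr g.2
  have horder : orderOf (g : DihedralGroup n) = n := by
    rw [← Nat.card_zpowers, ← hHg, hcard]
  cases hgg : (g : DihedralGroup n) with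
  | sr i => rw [hgg, orderOf_sr] at horder; omega
  | r i =>
      rw [hgg] at hHg
      have hle : H ≤ zpowers (r 1 : DihedralGroup n) := by
        rw [hHg]
        exact zpowers_le.mpr (r_mem_zpowers_r_one i)
      refine Subgroup.eq_of_le_of_card_ge hle ?_
      rw [hcard, Nat.card_zpowers, orderOf_r_one]

/-- In a group isomorphic to `D_{2n}` (`n ≥ 3`), any element outside a cyclic subgroup of
order `n` is an involution inverting that subgroup. -/
lemma dihedral_conj_lemma {G : Type*} [Group G] {n : ℕ} (hn : 3 ≤ n)
    (e : G ≃* DihedralGroup n) (Z : Subgroup G) (hZc : IsCyclic Z) (hZcard : Nat.card Z = n)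
    {x : G} (hx : x ∉ Z) :
    x ^ 2 = 1 ∧ ∀ z ∈ Z, x * z * x⁻¹ = z⁻¹ := by
  haveI : NeZero n := ⟨by omega⟩
  haveI := hZc
  have hK : Z.map e.toMonoidHom = zpowers (r 1 : DihedralGroup n) := by
    apply cyclic_subgroup_eq_rot hn
    · exact isCyclic_of_surjective _
        (Subgroup.equivMapOfInjective Z e.toMonoidHom e.injective).surjective
    · exact (Nat.card_congr
        (Subgroup.equivMapOfInjective Z e.toMonoidHom e.injective).toEquiv).symm.trans hZcard
  have hex : ∀ w : G, e w ∈ zpowers (r 1 : DihedralGroup n) → w ∈ Z := by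
    intro w hw
    rw [← hK] at hw
    obtain ⟨z, hz, hzw⟩ := hw
    rwa [← e.injective hzw]
  obtain ⟨i, hi⟩ : ∃ i, e x = sr i := by
    cases hc : e x with
    | r i => exact absurd (hex x (hc ▸ r_mem_zpowers_r_one i)) hx
    | sr i => exact ⟨i, rfl⟩
  have hconj : ∀ w : DihedralGroup n, w ∈ zpowers (r 1 : DihedralGroup n) →
      sr i * w * (sr i)⁻¹ = w⁻¹ := by
    intro w hw
    obtain ⟨k, hk⟩ := mem_zpowers_iff.mp hw
    have h1 : (sr i : DihedralGroup n) * r 1 * (sr i)⁻¹ = (r 1)⁻¹ := by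
      have hinv : ((sr i : DihedralGroup n))⁻¹ = sr i := rfl
      have hinv2 : ((r 1 : DihedralGroup n))⁻¹ = r (-1) := rfl
      rw [hinv, hinv2, sr_mul_r, sr_mul_sr]
      ring_nf
    calc sr i * w * (sr i)⁻¹ = (MulAut.conj (sr i : DihedralGroup n)) w := rfl
      _ = w⁻¹ := by
          rw [← hk, map_zpow, MulAut.conj_apply, h1, inv_zpow]
  constructor
  · apply e.injective
    rw [map_pow, hi, map_one, sq, sr_mul_self]
  · intro z hz
    apply e.injective
    have hze : e z ∈ zpowers (r 1 : DihedralGroup n) :=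
      hK ▸ Subgroup.mem_map_of_mem _ hz
    rw [map_mul, map_mul, map_inv, map_inv, hi]
    exact hconj (e z) hze

end auxdihedral

/-- For a regular subgroup `R ≅ D_{2n}` of `A = Aut(Cay(D_{2n},S))`,
`R` is conjugate to `R(D_{2n})` in `A` iff the unique cyclic subgroup of order `n`
of `R` is conjugate to `⟨R(a)⟩` in `A`. -/
theorem stmt11 (n : ℕ) (hn : 3 ≤ n) (S : Set (DihedralGroup n))
    (R : Subgroup (Equiv.Perm (DihedralGroup n))) (hle : R ≤ cayAut S)
    (hreg : IsRegularSubgroup R) (hiso : Nonempty (R ≃* DihedralGroup n)) :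
    (∃ f ∈ cayAut S, R.map (MulAut.conj f).toMonoidHom = rightReg (DihedralGroup n)) ↔
    (∃ Z : Subgroup (Equiv.Perm (DihedralGroup n)), Z ≤ R ∧ IsCyclic Z ∧
      Nat.card Z = n ∧
      ∃ f ∈ cayAut S, Z.map (MulAut.conj f).toMonoidHom =
        Subgroup.zpowers (Equiv.mulRight (DihedralGroup.r (1 : ZMod n)))) := by
  haveI : NeZero n := ⟨by omega⟩
  set Ra : Equiv.Perm (DihedralGroup n) := Equiv.mulRight (DihedralGroup.r (1 : ZMod n))
    with hRa_def
  constructor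
  · rintro ⟨f, hf, hmap⟩
    have hinj : Function.Injective (MulAut.conj f).toMonoidHom := (MulAut.conj f).injective
    have hconjRa : (MulAut.conj f).toMonoidHom (f⁻¹ * Ra * f) = Ra := by
      simp only [MulEquiv.coe_toMonoidHom, MulAut.conj_apply]
      group
    refine ⟨Subgroup.zpowers (f⁻¹ * Ra * f), ?_, isCyclic_zpowers' _, ?_, f, hf, ?_⟩
    · rw [Subgroup.zpowers_le]
      have hR : (R.map (MulAut.conj f).toMonoidHom).comap (MulAut.conj f).toMonoidHom = R :=
        Subgroup.comap_map_eq_self_of_injective hinj R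
      rw [hmap] at hR
      rw [← hR]
      apply Subgroup.mem_comap.mpr
      rw [hconjRa]
      exact ⟨DihedralGroup.r (1 : ZMod n), rfl⟩
    · rw [Nat.card_zpowers]
      have h2 := orderOf_injective (MulAut.conj f).toMonoidHom hinj (f⁻¹ * Ra * f)
      rw [hconjRa] at h2
      rw [← h2, hRa_def, orderOf_mulRight', DihedralGroup.orderOf_r_one]
    · rw [MonoidHom.map_zpowers, hconjRa]
  · rintro ⟨Z, hZR, hZc, hZcard, f, hf, hZmap⟩
    refine ⟨f, hf, ?_⟩
    have hinj : Function.Injective (MulAut.conj f).toMonoidHom := (MulAut.conj f).injective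
    set R' := R.map (MulAut.conj f).toMonoidHom with hR'
    have hRa : Subgroup.zpowers Ra ≤ R' := by
      rw [← hZmap]
      exact Subgroup.map_mono hZR
    obtain ⟨e0⟩ := hiso
    let e : R' ≃* DihedralGroup n :=
      (Subgroup.equivMapOfInjective R (MulAut.conj f).toMonoidHom hinj).symm.trans e0
    -- the element b' of R' sending 1 to sr 0
    obtain ⟨h0, hh0, -⟩ := hreg (f⁻¹ (1 : DihedralGroup n)) (f⁻¹ (DihedralGroup.sr (0 : ZMod n)))
    set b' : Equiv.Perm (DihedralGroup n) := f * (h0 : Equiv.Perm (DihedralGroup n)) * f⁻¹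
      with hb'def
    have hb'R' : b' ∈ R' := ⟨(h0 : Equiv.Perm (DihedralGroup n)), h0.2, rfl⟩
    have hb'1 : b' (1 : DihedralGroup n) = DihedralGroup.sr (0 : ZMod n) := by
      rw [hb'def]
      simp only [Equiv.Perm.mul_apply]
      rw [hh0]
      simp
    have hb'notin : b' ∉ Subgroup.zpowers Ra := by
      intro hmem
      obtain ⟨k, hk⟩ := Subgroup.mem_zpowers_iff.mp hmem
      rw [hRa_def, mulRight_zpow'] at hk
      have h5 := congrArg (fun e : Equiv.Perm (DihedralGroup n) => e 1) hk
      simp only [Equiv.coe_mulRight, one_mul] at h5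
      rw [hb'1] at h5
      obtain ⟨m, hm⟩ : ∃ m : ZMod n, (DihedralGroup.r (1 : ZMod n)) ^ k = DihedralGroup.r m := by
        cases k with
        | ofNat l =>
            exact ⟨(l : ZMod n), by
              rw [show (Int.ofNat l) = (l : ℤ) from rfl, zpow_natCast, DihedralGroup.r_one_pow]⟩
        | negSucc l =>
            refine ⟨-(l + 1 : ℕ), ?_⟩
            rw [zpow_negSucc, DihedralGroup.r_one_pow]
            rfl
      rw [hm] at h5
      exact absurd h5 (by simp)
    -- apply the dihedral lemma inside R'
    have hZ'c : IsCyclic ((Subgroup.zpowers Ra).subgroupOf R') := by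
      haveI := isCyclic_zpowers' Ra
      exact isCyclic_of_surjective _ (Subgroup.subgroupOfEquivOfLe hRa).symm.surjective
    have hZ'card : Nat.card ((Subgroup.zpowers Ra).subgroupOf R') = n := by
      rw [Nat.card_congr (Subgroup.subgroupOfEquivOfLe hRa).toEquiv, Nat.card_zpowers,
        hRa_def, orderOf_mulRight', DihedralGroup.orderOf_r_one]
    have hxnotin : (⟨b', hb'R'⟩ : R') ∉ (Subgroup.zpowers Ra).subgroupOf R' := by
      rw [Subgroup.mem_subgroupOf]
      exact hb'notin
    obtain ⟨hx2, hxinv⟩ := dihedral_conj_lemma hn e _ hZ'c hZ'card hxnotin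
    have hb2 : b' * b' = 1 := by
      have := congrArg (Subtype.val) hx2
      rw [sq] at this
      simpa using this
    have hbinv : ∀ z : Equiv.Perm (DihedralGroup n),
        z ∈ Subgroup.zpowers Ra → b' * z * b'⁻¹ = z⁻¹ := by
      intro z hz
      have hmem : (⟨z, hRa hz⟩ : R') ∈ (Subgroup.zpowers Ra).subgroupOf R' :=
        Subgroup.mem_subgroupOf.mpr hz
      have := congrArg (Subtype.val) (hxinv ⟨z, hRa hz⟩ hmem)
      simpa using this
    have hrmem : ∀ i : ZMod n, Equiv.mulRight (DihedralGroup.r i) ∈ Subgroup.zpowers Ra := by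
      intro i
      refine Subgroup.mem_zpowers_iff.mpr ⟨(i.val : ℤ), ?_⟩
      rw [hRa_def, zpow_natCast, mulRight_pow', DihedralGroup.r_one_pow, ZMod.natCast_zmod_val]
    have hr : ∀ i : ZMod n, b' (DihedralGroup.r i) = DihedralGroup.sr (-i) := by
      intro i
      have h1 := hbinv _ (hrmem i)
      have h2 : b' * Equiv.mulRight (DihedralGroup.r i)
          = (Equiv.mulRight (DihedralGroup.r i))⁻¹ * b' := by
        rw [← h1]; group
      have h3 := congrArg (fun e : Equiv.Perm (DihedralGroup n) => e 1) h2
      simp only [Equiv.Perm.mul_apply, Equiv.coe_mulRight, one_mul, mulRight_inv'] at h3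
      rw [hb'1] at h3
      have h4 : (DihedralGroup.r i : DihedralGroup n)⁻¹ = DihedralGroup.r (-i) := rfl
      rw [h4, DihedralGroup.sr_mul_r, zero_add] at h3
      exact h3
    have hsr : ∀ i : ZMod n, b' (DihedralGroup.sr i) = DihedralGroup.r (-i) := by
      intro i
      have h1 : b' (DihedralGroup.r (-i)) = DihedralGroup.sr i := by
        rw [hr, neg_neg]
      have h2 : b' (b' (DihedralGroup.r (-i))) = DihedralGroup.r (-i) := by
        have := congrArg (fun e : Equiv.Perm (DihedralGroup n) => e (DihedralGroup.r (-i))) hb2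
        simpa [Equiv.Perm.mul_apply] using this
      rw [h1] at h2
      exact h2
    have hb'eq : b' = Equiv.mulRight (DihedralGroup.sr (0 : ZMod n)) := by
      ext x
      cases x with
      | r i =>
          rw [hr]
          simp only [Equiv.coe_mulRight, DihedralGroup.r_mul_sr, zero_sub]
      | sr i =>
          rw [hsr]
          simp only [Equiv.coe_mulRight, DihedralGroup.sr_mul_sr, zero_sub]
    have hsr0mem : Equiv.mulRight (DihedralGroup.sr (0 : ZMod n)) ∈ R' := hb'eq ▸ hb'R'
    have hRR : rightReg (DihedralGroup n) ≤ R' := by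
      rintro p ⟨g, rfl⟩
      cases g with
      | r i => exact hRa (hrmem i)
      | sr i =>
          show Equiv.mulRight (DihedralGroup.sr i) ∈ R'
          have heq : Equiv.mulRight (DihedralGroup.sr i)
              = Equiv.mulRight (DihedralGroup.r i)
                * Equiv.mulRight (DihedralGroup.sr (0 : ZMod n)) := by
            rw [← mulRight_mul', DihedralGroup.sr_mul_r, zero_add]
          rw [heq]
          exact Subgroup.mul_mem _ (hRa (hrmem i)) hsr0mem
    have hcard1 : Nat.card (rightReg (DihedralGroup n)) = Nat.card (DihedralGroup n) := by
      have hbij : Function.Bijective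
          (fun g : DihedralGroup n =>
            (⟨Equiv.mulRight g, ⟨g, rfl⟩⟩ : rightReg (DihedralGroup n))) := by
        constructor
        · intro a b hab
          exact mulRight_injective' (congrArg Subtype.val hab)
        · rintro ⟨p, g, rfl⟩
          exact ⟨g, rfl⟩
      exact (Nat.card_congr (Equiv.ofBijective _ hbij)).symm
    have hcard2 : Nat.card R' = Nat.card (DihedralGroup n) := Nat.card_congr e.toEquiv
    exact (Subgroup.eq_of_le_of_card_ge hRR (by rw [hcard1, hcard2])).symm
end

section
/- All nilpotent Hall π-subgroups of a finite group are conjugate: if G is a finite group, π a set of primes, and H, K ≤ G are nilpotent Hall π-subgroups (i.e., |H| and |K| are π-numbers and their indices are π′-numbers), then H and K are conjugate in G. -/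
open Pointwise

universe u

section WielandtAuxiliary

variable {G : Type u} [Group G]

private lemma conjMap_conjMap (H : Subgroup G) (a b : G) :
    (H.map (MulAut.conj a).toMonoidHom).map (MulAut.conj b).toMonoidHom
      = H.map (MulAut.conj (b * a)).toMonoidHom := by
  rw [Subgroup.map_map]
  congr 1
  ext x
  simp [MulAut.conj_apply, mul_assoc]

private lemma conjMap_one (H : Subgroup G) :
    H.map (MulAut.conj (1 : G)).toMonoidHom = H := by
  have : (MulAut.conj (1 : G)).toMonoidHom = MonoidHom.id G := by
    ext x; simp
  rw [this, Subgroup.map_id]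

private lemma subgroup_eq_of_le_of_card_le [Finite G] {H K : Subgroup G}
    (h : H ≤ K) (hc : Nat.card K ≤ Nat.card H) : H = K := by
  apply SetLike.coe_injective
  apply Set.eq_of_subset_of_ncard_le h ?_ (Set.toFinite _)
  rw [← Nat.card_coe_set_eq, ← Nat.card_coe_set_eq]
  exact hc

private lemma sylow_map_eq [Finite G] {p : ℕ} [Fact p.Prime]
    (H : Subgroup G) (hind : ¬ p ∣ H.index) (P : Sylow p H) :
    ∃ R : Sylow p G, (P : Subgroup H).map H.subtype = (R : Subgroup G) := by
  obtain ⟨R, hR⟩ := (P.isPGroup'.map H.subtype).exists_le_sylow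
  refine ⟨R, subgroup_eq_of_le_of_card_le hR ?_⟩
  have hcard : Nat.card ((P : Subgroup H).map H.subtype) = Nat.card P :=
    (Nat.card_congr ((P : Subgroup H).equivMapOfInjective H.subtype
      H.subtype_injective).toEquiv).symm
  have hfact : (Nat.card G).factorization p = (Nat.card H).factorization p := by
    rw [← H.card_mul_index, Nat.factorization_mul Nat.card_pos.ne'
      Subgroup.index_ne_zero_of_finite]
    simp [Nat.factorization_eq_zero_of_not_dvd hind]
  rw [hcard, P.card_eq_multiplicity, R.card_eq_multiplicity, hfact]

private lemma norm_image (K : Subgroup G) (PK : Subgroup ↥K) (hn : PK.Normal) :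
    ∀ k ∈ K, ∀ x ∈ PK.map K.subtype, k * x * k⁻¹ ∈ PK.map K.subtype := by
  rintro k hk x ⟨y, hy, rfl⟩
  exact ⟨⟨k, hk⟩ * y * ⟨k, hk⟩⁻¹, hn.conj_mem y hy ⟨k, hk⟩, rfl⟩

private lemma norm_map_conj {K Q : Subgroup G}
    (h : ∀ k ∈ K, ∀ x ∈ Q, k * x * k⁻¹ ∈ Q) (g : G) :
    ∀ k ∈ K.map (MulAut.conj g).toMonoidHom, ∀ x ∈ Q.map (MulAut.conj g).toMonoidHom,
      k * x * k⁻¹ ∈ Q.map (MulAut.conj g).toMonoidHom := by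
  rintro _ ⟨k, hk, rfl⟩ _ ⟨x, hx, rfl⟩
  refine ⟨k * x * k⁻¹, h k hk x hx, ?_⟩
  simp [MulAut.conj_apply]
  group

private lemma normalizes_center {A Q : Subgroup G}
    (hn : ∀ a ∈ A, ∀ x ∈ Q, a * x * a⁻¹ ∈ Q) :
    A ≤ Subgroup.normalizer ((Subgroup.centralizer (Q : Set G) ⊓ Q : Subgroup G) : Set G) := by
  have key : ∀ a ∈ A, ∀ x ∈ Subgroup.centralizer (Q : Set G) ⊓ Q,
      a * x * a⁻¹ ∈ Subgroup.centralizer (Q : Set G) ⊓ Q := by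
    intro a ha x hx
    obtain ⟨hx1, hx2⟩ := Subgroup.mem_inf.mp hx
    refine Subgroup.mem_inf.mpr ⟨?_, hn a ha x hx2⟩
    rw [Subgroup.mem_centralizer_iff]
    intro y hy
    have hy' : a⁻¹ * y * a ∈ Q := by
      have := hn a⁻¹ (inv_mem ha) y hy
      simpa using this
    have hcomm := Subgroup.mem_centralizer_iff.mp hx1 _ hy'
    have hconj := congrArg (fun t => a * t * a⁻¹) hcomm
    simp only [mul_assoc] at hconj ⊢
    simpa [mul_assoc] using hconj
  intro a ha
  rw [Subgroup.mem_normalizer_iff]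
  intro x
  constructor
  · exact fun hx => key a ha x hx
  · intro hx
    have h2 := key a⁻¹ (inv_mem ha) _ hx
    simpa [mul_assoc] using h2

private lemma map_conj_comm {G' : Type*} [Group G'] (f : G →* G') (H : Subgroup G) (c : G) :
    (H.map (MulAut.conj c).toMonoidHom).map f
      = (H.map f).map (MulAut.conj (f c)).toMonoidHom := by
  rw [Subgroup.map_map, Subgroup.map_map]
  congr 1
  ext x
  simp [MulAut.conj_apply]

end WielandtAuxiliary

private lemma wielandt_aux : ∀ (n : ℕ) (G : Type u) [Group G] [Finite G],
    Nat.card G ≤ n → ∀ (π : Set ℕ) (H K : Subgroup G),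
    (∀ q : ℕ, q.Prime → q ∣ Nat.card H → q ∈ π) →
    (∀ q : ℕ, q.Prime → q ∣ H.index → q ∉ π) →
    (∀ q : ℕ, q.Prime → q ∣ Nat.card K → q ∈ π) →
    (∀ q : ℕ, q.Prime → q ∣ K.index → q ∉ π) →
    Group.IsNilpotent H → Group.IsNilpotent K →
    ∃ g : G, H.map (MulAut.conj g).toMonoidHom = K := by
  intro n
  induction n with
  | zero =>
    intro G _ _ hle π H K _ _ _ _ _ _
    have := Nat.card_pos (α := G)
    omega
  | succ n ih =>
    intro G _ _ hle π H K hH1 hH2 hK1 hK2 hHnil hKnil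
    haveI := hHnil
    haveI := hKnil
    -- the two Hall subgroups have the same cardinality
    have cop : ∀ (A B : Subgroup G),
        (∀ q : ℕ, q.Prime → q ∣ Nat.card A → q ∈ π) →
        (∀ q : ℕ, q.Prime → q ∣ B.index → q ∉ π) →
        Nat.Coprime (Nat.card A) B.index := by
      intro A B hA hB
      by_contra hc
      obtain ⟨q, hq, hq1, hq2⟩ := Nat.Prime.not_coprime_iff_dvd.mp hc
      exact hB q hq hq2 (hA q hq hq1)
    have hdvdHK : Nat.card H ∣ Nat.card K := by
      have hd := Subgroup.card_subgroup_dvd_card H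
      rw [← K.card_mul_index] at hd
      exact (cop H K hH1 hK2).dvd_of_dvd_mul_right hd
    have hdvdKH : Nat.card K ∣ Nat.card H := by
      have hd := Subgroup.card_subgroup_dvd_card K
      rw [← H.card_mul_index] at hd
      exact (cop K H hK1 hH2).dvd_of_dvd_mul_right hd
    have hcardHK : Nat.card H = Nat.card K := Nat.dvd_antisymm hdvdHK hdvdKH
    by_cases htriv : Nat.card H = 1
    · refine ⟨1, ?_⟩
      have h1 : H = ⊥ := Subgroup.card_eq_one.mp htriv
      have h2 : K = ⊥ := Subgroup.card_eq_one.mp (hcardHK ▸ htriv)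
      rw [h1, h2, Subgroup.map_bot]
    obtain ⟨p, hp, hpdvd⟩ := Nat.exists_prime_and_dvd htriv
    haveI : Fact p.Prime := ⟨hp⟩
    have hpπ : p ∈ π := hH1 p hp hpdvd
    have hpH : ¬ p ∣ H.index := fun h => hH2 p hp h hpπ
    have hpK : ¬ p ∣ K.index := fun h => hK2 p hp h hpπ
    obtain ⟨PH⟩ : Nonempty (Sylow p H) := inferInstance
    obtain ⟨PK⟩ : Nonempty (Sylow p K) := inferInstance
    obtain ⟨RH, hRH⟩ := sylow_map_eq H hpH PH
    obtain ⟨RK, hRK⟩ := sylow_map_eq K hpK PK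
    obtain ⟨g, hg⟩ := MulAction.exists_smul_eq G RK RH
    have hmapR : (RK : Subgroup G).map (MulAut.conj g).toMonoidHom = RH := by
      rw [← hg, Sylow.coe_subgroup_smul, Subgroup.pointwise_smul_def]
      rfl
    set K2 := K.map (MulAut.conj g).toMonoidHom with hK2def
    have hcardK2 : Nat.card K2 = Nat.card K :=
      (Nat.card_congr (K.equivMapOfInjective (MulAut.conj g).toMonoidHom
        (MulAut.conj g).injective).toEquiv).symm
    have hindK2 : K2.index = K.index := by
      apply Subgroup.index_map_eq K (MulAut.conj g).surjective
      intro x hx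
      rw [MonoidHom.mem_ker] at hx
      have : x = 1 := (MulAut.conj g).injective (by simpa using hx)
      rw [this]
      exact K.one_mem
    haveI hK2nil : Group.IsNilpotent K2 :=
      nilpotent_of_surjective ((MulAut.conj g).toMonoidHom.subgroupMap K)
        ((MulAut.conj g).toMonoidHom.subgroupMap_surjective K)
    have hK2_1 : ∀ q : ℕ, q.Prime → q ∣ Nat.card K2 → q ∈ π := by
      intro q hq hd; exact hK1 q hq (hcardK2 ▸ hd)
    have hK2_2 : ∀ q : ℕ, q.Prime → q ∣ K2.index → q ∉ π := by
      intro q hq hd; exact hK2 q hq (hindK2 ▸ hd)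
    -- normality of the Sylow images
    have hPHnormal : (PH : Subgroup H).Normal :=
      Sylow.normal_of_normalizerCondition normalizerCondition_of_isNilpotent PH
    have hPKnormal : (PK : Subgroup K).Normal :=
      Sylow.normal_of_normalizerCondition normalizerCondition_of_isNilpotent PK
    have hnH : ∀ a ∈ H, ∀ x ∈ (RH : Subgroup G), a * x * a⁻¹ ∈ (RH : Subgroup G) := by
      rw [← hRH]
      exact norm_image H _ hPHnormal
    have hnK2 : ∀ a ∈ K2, ∀ x ∈ (RH : Subgroup G), a * x * a⁻¹ ∈ (RH : Subgroup G) := by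
      rw [← hmapR, ← hRK, hK2def]
      exact norm_map_conj (norm_image K _ hPKnormal) g
    have hRHH : (RH : Subgroup G) ≤ H := by
      rw [← hRH]
      exact Subgroup.map_subtype_le _
    have hRHK2 : (RH : Subgroup G) ≤ K2 := by
      rw [← hmapR, ← hRK, hK2def]
      exact Subgroup.map_mono (Subgroup.map_subtype_le _)
    -- the center subgroup Z
    set Z := Subgroup.centralizer ((RH : Subgroup G) : Set G) ⊓ (RH : Subgroup G) with hZdef
    have hZRH : Z ≤ (RH : Subgroup G) := inf_le_right
    have hpG : p ∣ Nat.card G := hpdvd.trans H.card_subgroup_dvd_card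
    have h1lt : 1 < Nat.card (RH : Subgroup G) := by
      rw [RH.card_eq_multiplicity]
      refine Nat.one_lt_pow ?_ hp.one_lt
      exact (Nat.Prime.factorization_pos_of_dvd hp Nat.card_pos.ne' hpG).ne'
    haveI : Nontrivial (RH : Subgroup G) :=
      Finite.one_lt_card_iff_nontrivial.mp h1lt
    haveI := IsPGroup.center_nontrivial RH.isPGroup'
    obtain ⟨z, hz⟩ := exists_ne (1 : Subgroup.center (RH : Subgroup G))
    have hzZ : ((z : (RH : Subgroup G)) : G) ∈ Z := by
      refine Subgroup.mem_inf.mpr ⟨?_, (z : (RH : Subgroup G)).2⟩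
      rw [Subgroup.mem_centralizer_iff]
      intro x hx
      have hc := Subgroup.mem_center_iff.mp z.2 ⟨x, hx⟩
      exact congrArg Subtype.val hc
    have hZbot : Z ≠ ⊥ := by
      intro hb
      rw [hb, Subgroup.mem_bot] at hzZ
      exact hz (Subtype.ext (Subtype.ext hzZ))
    have hHle : H ≤ Subgroup.normalizer (Z : Set G) := normalizes_center hnH
    have hK2le : K2 ≤ Subgroup.normalizer (Z : Set G) := normalizes_center hnK2
    have hZH : Z ≤ H := hZRH.trans hRHH
    have hZK2 : Z ≤ K2 := hZRH.trans hRHK2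
    have hmain : ∃ c : G, H.map (MulAut.conj c).toMonoidHom = K2 := by
      by_cases hN : Subgroup.normalizer (Z : Set G) = ⊤
      · -- Z is normal in G : pass to the quotient
        haveI hZn : Z.Normal := Subgroup.normalizer_eq_top_iff.mp hN
        set φ := QuotientGroup.mk' Z with hφ
        have hker : φ.ker = Z := QuotientGroup.ker_mk' Z
        have hsurj : Function.Surjective φ := QuotientGroup.mk'_surjective Z
        have hZ1lt : 1 < Nat.card Z := by
          have h0 := Nat.card_pos (α := Z)
          have hne : Nat.card Z ≠ 1 := fun h => hZbot (Subgroup.card_eq_one.mp h)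
          omega
        have hcardlt : Nat.card (G ⧸ Z) < Nat.card G := by
          have hq : Nat.card (G ⧸ Z) = Z.index := (Subgroup.index_eq_card Z).symm
          rw [hq, ← Z.card_mul_index]
          have hpos : 0 < Z.index := Nat.pos_of_ne_zero Subgroup.index_ne_zero_of_finite
          exact (Nat.lt_mul_iff_one_lt_left hpos).mpr hZ1lt
        obtain ⟨gb, hgb⟩ := ih (G ⧸ Z) (by omega) π (H.map φ) (K2.map φ)
          (fun q hq hd => hH1 q hq
            (hd.trans (Subgroup.card_dvd_of_surjective (φ.subgroupMap H)
              (φ.subgroupMap_surjective H))))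
          (fun q hq hd => hH2 q hq (by
            rwa [Subgroup.index_map_eq H hsurj (hker.le.trans hZH)] at hd))
          (fun q hq hd => hK2_1 q hq
            (hd.trans (Subgroup.card_dvd_of_surjective (φ.subgroupMap K2)
              (φ.subgroupMap_surjective K2))))
          (fun q hq hd => hK2_2 q hq (by
            rwa [Subgroup.index_map_eq K2 hsurj (hker.le.trans hZK2)] at hd))
          (nilpotent_of_surjective (φ.subgroupMap H) (φ.subgroupMap_surjective H))
          (nilpotent_of_surjective (φ.subgroupMap K2) (φ.subgroupMap_surjective K2))
        obtain ⟨c, rfl⟩ := hsurj gb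
        refine ⟨c, ?_⟩
        have heq : (H.map (MulAut.conj c).toMonoidHom).map φ = K2.map φ := by
          rw [map_conj_comm φ H c, hgb]
        have hcm := congrArg (Subgroup.comap φ) heq
        rw [Subgroup.comap_map_eq, Subgroup.comap_map_eq, hker] at hcm
        have hZHc : Z ≤ H.map (MulAut.conj c).toMonoidHom := by
          intro w hw
          refine ⟨c⁻¹ * w * c, hZH (by simpa using hZn.conj_mem w hw c⁻¹), ?_⟩
          simp [MulAut.conj_apply]
          group
        rwa [sup_of_le_left hZHc, sup_of_le_left hZK2] at hcm
      · -- pass to the proper subgroup N = normalizer of Z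
        set N := Subgroup.normalizer (Z : Set G) with hNdef
        have hcardNlt : Nat.card N < Nat.card G := by
          refine lt_of_le_of_ne (Subgroup.card_le_card_group N) ?_
          intro hcard
          exact hN (Subgroup.eq_top_of_card_eq N hcard)
        have eH : (H.subgroupOf N) ≃* H := Subgroup.subgroupOfEquivOfLe hHle
        have eK : (K2.subgroupOf N) ≃* K2 := Subgroup.subgroupOfEquivOfLe hK2le
        haveI : Group.IsNilpotent (H.subgroupOf N) := nilpotent_of_mulEquiv eH.symm
        haveI : Group.IsNilpotent (K2.subgroupOf N) := nilpotent_of_mulEquiv eK.symm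
        obtain ⟨m, hm⟩ := ih N (by omega) π (H.subgroupOf N) (K2.subgroupOf N)
          (fun q hq hd => hH1 q hq (by rwa [Nat.card_congr eH.toEquiv] at hd))
          (fun q hq hd => hH2 q hq
            (hd.trans ⟨N.index, (Subgroup.relIndex_mul_index hHle).symm⟩))
          (fun q hq hd => hK2_1 q hq (by rwa [Nat.card_congr eK.toEquiv] at hd))
          (fun q hq hd => hK2_2 q hq
            (hd.trans ⟨N.index, (Subgroup.relIndex_mul_index hK2le).symm⟩))
          inferInstance inferInstance
        refine ⟨(m : G), ?_⟩
        have hpush := congrArg (Subgroup.map N.subtype) hm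
        have hcomp : N.subtype.comp (MulAut.conj m).toMonoidHom
            = (MulAut.conj (m : G)).toMonoidHom.comp N.subtype := by
          ext x
          simp [MulAut.conj_apply]
        rw [Subgroup.map_map, hcomp, ← Subgroup.map_map, Subgroup.subgroupOf_map_subtype,
          Subgroup.subgroupOf_map_subtype, inf_of_le_left hHle, inf_of_le_left hK2le] at hpush
        exact hpush
    obtain ⟨c, hc⟩ := hmain
    refine ⟨g⁻¹ * c, ?_⟩
    rw [← conjMap_conjMap H c g⁻¹, hc, hK2def, conjMap_conjMap K g g⁻¹, inv_mul_cancel,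
      conjMap_one]

/-- Wielandt: All nilpotent Hall `π`-subgroups of a finite group
are conjugate. -/
theorem stmt14 {G : Type*} [Group G] [Finite G] (π : Set ℕ)
    (H K : Subgroup G)
    (hHhall : (∀ q : ℕ, q.Prime → q ∣ Nat.card H → q ∈ π) ∧
              (∀ q : ℕ, q.Prime → q ∣ H.index → q ∉ π))
    (hKhall : (∀ q : ℕ, q.Prime → q ∣ Nat.card K → q ∈ π) ∧
              (∀ q : ℕ, q.Prime → q ∣ K.index → q ∉ π))
    (hHnil : Group.IsNilpotent H) (hKnil : Group.IsNilpotent K) :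
    ∃ g : G, H.map (MulAut.conj g).toMonoidHom = K := by
  obtain ⟨hH1, hH2⟩ := hHhall
  obtain ⟨hK1, hK2⟩ := hKhall
  exact wielandt_aux (Nat.card G) G le_rfl π H K hH1 hH2 hK1 hK2 hHnil hKnil
end
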